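/- Let k ≥ 1 and suppose positive integers x, y, z, n with n ≥ 2 satisfy ((F_k − 2)n)^x + (2^{2^{k−1}+1} n)^y = (F_k n)^z with x < z < y. Then n shares a common prime factor with F_k − 2 = ∏_{i=0}^{k−1} F_i. -/

import Mathlib

theorem stmt19 (k n x y z : ℕ) (hk : 1 ≤ k) (hn : 2 ≤ n)
    (hx : 0 < x) (hy : 0 < y) (hz : 0 < z) (hxz : x < z) (hzy : z < y)
    (h : ((2 ^ 2 ^ k + 1 - 2) * n) ^ x + (2 ^ (2 ^ (k - 1) + 1) * n) ^ y
        = ((2 ^ 2 ^ k + 1) * n) ^ z) :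
    ∃ p : ℕ, p.Prime ∧ p ∣ n ∧ p ∣ 2 ^ 2 ^ k - 1 := by
  set A := 2 ^ 2 ^ k - 1 with hA
  have hAe : 2 ^ 2 ^ k + 1 - 2 = A := by
    have : 1 ≤ 2 ^ 2 ^ k := Nat.one_le_two_pow
    omega
  rw [hAe, mul_pow, mul_pow, mul_pow] at h
  have hd1 : n ^ (x + 1) ∣ (2 ^ (2 ^ (k - 1) + 1)) ^ y * n ^ y :=
    Dvd.dvd.mul_left (pow_dvd_pow n (by omega)) _
  have hd2 : n ^ (x + 1) ∣ (2 ^ 2 ^ k + 1) ^ z * n ^ z :=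
    Dvd.dvd.mul_left (pow_dvd_pow n (by omega)) _
  have hd : n ^ (x + 1) ∣ A ^ x * n ^ x := by
    have : A ^ x * n ^ x = (2 ^ 2 ^ k + 1) ^ z * n ^ z
        - (2 ^ (2 ^ (k - 1) + 1)) ^ y * n ^ y := by omega
    rw [this]
    exact Nat.dvd_sub hd2 hd1
  have hnA : n ∣ A ^ x := by
    have hpos : 0 < n ^ x := Nat.pow_pos (by omega)
    have : n ^ x * n ∣ n ^ x * A ^ x := by
      rw [← pow_succ]
      calc n ^ (x + 1) ∣ A ^ x * n ^ x := hd
        _ = n ^ x * A ^ x := by ring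
    exact (Nat.mul_dvd_mul_iff_left hpos).mp this
  refine ⟨n.minFac, Nat.minFac_prime (by omega), Nat.minFac_dvd n, ?_⟩
  exact (Nat.minFac_prime (by omega : n ≠ 1)).dvd_of_dvd_pow
    ((Nat.minFac_dvd n).trans hnA)
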